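/- For integers m, q with 2 ≤ q ≤ m, ∫₀^∞ (sin t)^{2m}/t^{2q−1} dt = (1/2^{2m−1}) Σ_{k=1}^m (−1)^{k+q} C(2m, m−k) ((2k)^{2q−2}/(2q−2)!) ln k. -/

import Mathlib

open Real Filter Finset MeasureTheory intervalIntegral Set

/-- Interval integrability from measurability plus a bound on `Ioc a b`. -/
lemma intInt {f : ℝ → ℝ} (hf : Measurable f) {a b C : ℝ} (hab : a ≤ b)
    (hb : ∀ t ∈ Set.Ioc a b, |f t| ≤ C) :
    IntervalIntegrable f volume a b := by
  rw [intervalIntegrable_iff_integrableOn_Ioc_of_le hab]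
  apply Integrable.mono' (g := fun _ => C)
  · exact integrableOn_const measure_Ioc_lt_top.ne
  · exact (hf.aestronglyMeasurable).restrict
  · exact (ae_restrict_iff' measurableSet_Ioc).2 (Filter.Eventually.of_forall fun t ht => hb t ht)

lemma cos_sub_one_abs_le (x : ℝ) : |Real.cos x - 1| ≤ x ^ 2 / 2 := by
  rw [abs_sub_comm, abs_of_nonneg (by linarith [Real.cos_le_one x])]
  nlinarith [Real.one_sub_sq_div_two_le_cos (x := x), sq_nonneg x]

lemma meas_cosdiv : Measurable (fun u : ℝ => (Real.cos u - 1) / u) :=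
  (Real.continuous_cos.sub continuous_const).measurable.div measurable_id

lemma cosm1_intInt {a b : ℝ} (ha : 0 ≤ a) (hab : a ≤ b) :
    IntervalIntegrable (fun u => (Real.cos u - 1) / u) volume a b := by
  apply intInt meas_cosdiv hab (C := b / 2)
  intro t ht
  have ht0 : (0:ℝ) < t := lt_of_le_of_lt ha ht.1
  rw [abs_div, abs_of_pos ht0, div_le_iff₀ ht0]
  calc |Real.cos t - 1| ≤ t ^ 2 / 2 := cos_sub_one_abs_le t
    _ = (t / 2) * t := by ring
    _ ≤ b / 2 * t := by
        have := ht.2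
        have := ht.1
        nlinarith

/-- `∫_1^Y cos u / u` converges as `Y → ∞`. -/
lemma cosdiv_tendsto : ∃ L : ℝ, Tendsto (fun Y => ∫ u in (1:ℝ)..Y, Real.cos u / u) atTop (nhds L) := by
  -- integration by parts : ∫_1^Y u⁻¹ * cos u = sin Y / Y - sin 1 - ∫_1^Y (-(u^2)⁻¹) * sin u
  have key : ∀ Y : ℝ, 1 ≤ Y →
      ∫ u in (1:ℝ)..Y, Real.cos u / u
        = Y⁻¹ * Real.sin Y - Real.sin 1 + ∫ u in (1:ℝ)..Y, (u ^ 2)⁻¹ * Real.sin u := by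
    intro Y hY
    have h1 : ∀ x ∈ Set.uIcc (1:ℝ) Y, x ≠ 0 := by
      intro x hx
      rw [Set.uIcc_of_le hY] at hx
      exact ne_of_gt (lt_of_lt_of_le one_pos hx.1)
    have hu : ∀ x ∈ Set.Ioo (min (1:ℝ) Y) (max 1 Y), HasDerivAt (fun u : ℝ => u⁻¹) (-(x ^ 2)⁻¹) x := by
      intro x hx
      rw [min_eq_left hY, max_eq_right hY] at hx
      have hx0 : x ≠ 0 := ne_of_gt (lt_trans one_pos hx.1)
      simpa [hx0] using (hasDerivAt_inv hx0)
    have hv : ∀ x ∈ Set.Ioo (min (1:ℝ) Y) (max 1 Y), HasDerivAt Real.sin (Real.cos x) x :=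
      fun x _ => Real.hasDerivAt_sin x
    have hcont_u : ContinuousOn (fun u : ℝ => u⁻¹) (Set.uIcc 1 Y) :=
      ContinuousOn.inv₀ continuousOn_id h1
    have hiu : IntervalIntegrable (fun x : ℝ => -(x ^ 2)⁻¹) volume 1 Y := by
      apply ContinuousOn.intervalIntegrable
      apply ContinuousOn.neg
      apply ContinuousOn.inv₀ (continuousOn_pow 2)
      intro x hx
      exact pow_ne_zero 2 (h1 x hx)
    have hiv : IntervalIntegrable Real.cos volume 1 Y :=
      Real.continuous_cos.intervalIntegrable 1 Y
    have := intervalIntegral.integral_mul_deriv_eq_deriv_mul_of_hasDerivAt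
      (u := fun u : ℝ => u⁻¹) (v := Real.sin) (u' := fun x => -(x ^ 2)⁻¹) (v' := Real.cos)
      hcont_u Real.continuous_sin.continuousOn hu hv hiu hiv
    have heq : ∀ u : ℝ, u⁻¹ * Real.cos u = Real.cos u / u := fun u => by
      rw [inv_mul_eq_div]
    calc ∫ u in (1:ℝ)..Y, Real.cos u / u = ∫ u in (1:ℝ)..Y, u⁻¹ * Real.cos u := by
          simp_rw [heq]
      _ = Y⁻¹ * Real.sin Y - 1⁻¹ * Real.sin 1 - ∫ x in (1:ℝ)..Y, -(x ^ 2)⁻¹ * Real.sin x := this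
      _ = Y⁻¹ * Real.sin Y - Real.sin 1 + ∫ u in (1:ℝ)..Y, (u ^ 2)⁻¹ * Real.sin u := by
          simp_rw [neg_mul]
          rw [intervalIntegral.integral_neg, inv_one]
          ring
  -- the integral ∫ (u²)⁻¹ sin u converges on Ioi 1
  have hint : IntegrableOn (fun u : ℝ => (u ^ 2)⁻¹ * Real.sin u) (Set.Ioi 1) volume := by
    apply Integrable.mono' (g := fun u : ℝ => (u ^ 2)⁻¹)
    · have : IntegrableOn (fun u : ℝ => u ^ (-2 : ℝ)) (Set.Ioi (1:ℝ)) volume := by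
        apply integrableOn_Ioi_rpow_of_lt (by norm_num) one_pos
      apply this.congr_fun ?_ measurableSet_Ioi
      intro x hx
      show x ^ (-2 : ℝ) = (x ^ 2)⁻¹
      rw [Real.rpow_neg (le_of_lt (lt_trans one_pos hx)), Real.rpow_two]
    · exact ((((continuous_pow 2).measurable).inv.mul Real.continuous_sin.measurable).aestronglyMeasurable).restrict
    · refine (ae_restrict_iff' measurableSet_Ioi).2 (Filter.Eventually.of_forall fun x hx => ?_)
      rw [Set.mem_Ioi] at hx
      have h2 : (0:ℝ) < x ^ 2 := by positivity
      rw [norm_mul, norm_inv]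
      calc ‖x ^ 2‖⁻¹ * ‖Real.sin x‖ ≤ ‖x ^ 2‖⁻¹ * 1 := by
            apply mul_le_mul_of_nonneg_left (by rw [Real.norm_eq_abs]; exact Real.abs_sin_le_one x)
              (by positivity)
        _ = (x ^ 2)⁻¹ := by rw [mul_one, Real.norm_eq_abs, abs_of_pos h2]
  refine ⟨-Real.sin 1 + ∫ u in Set.Ioi (1:ℝ), (u ^ 2)⁻¹ * Real.sin u, ?_⟩
  have h1 : Tendsto (fun Y : ℝ => Y⁻¹ * Real.sin Y) atTop (nhds 0) := by
    apply squeeze_zero_norm' ?_ (tendsto_inv_atTop_zero (𝕜 := ℝ))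
    filter_upwards [eventually_gt_atTop (0:ℝ)] with Y h
    rw [norm_mul, norm_inv]
    calc ‖Y‖⁻¹ * ‖Real.sin Y‖ ≤ ‖Y‖⁻¹ * 1 := by
          apply mul_le_mul_of_nonneg_left (by rw [Real.norm_eq_abs]; exact Real.abs_sin_le_one Y) (by positivity)
      _ = Y⁻¹ := by rw [mul_one, Real.norm_eq_abs, abs_of_pos h]
  have h2 : Tendsto (fun Y : ℝ => ∫ u in (1:ℝ)..Y, (u ^ 2)⁻¹ * Real.sin u) atTop
      (nhds (∫ u in Set.Ioi (1:ℝ), (u ^ 2)⁻¹ * Real.sin u)) :=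
    intervalIntegral_tendsto_integral_Ioi 1 hint tendsto_id
  have := (h1.sub (tendsto_const_nhds (x := Real.sin 1))).add h2
  rw [zero_sub] at this
  apply Tendsto.congr' _ this
  filter_upwards [eventually_ge_atTop (1:ℝ)] with Y hY
  rw [key Y hY]

noncomputable def Phi (Y : ℝ) : ℝ := ∫ u in (0:ℝ)..Y, (Real.cos u - 1) / u

lemma Phi_eq {Y : ℝ} (hY : 1 ≤ Y) :
    Phi Y = Phi 1 + (∫ u in (1:ℝ)..Y, Real.cos u / u) - Real.log Y := by
  have hY0 : (0:ℝ) < Y := lt_of_lt_of_le one_pos hY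
  have h01 : IntervalIntegrable (fun u => (Real.cos u - 1)/u) volume 0 1 :=
    cosm1_intInt le_rfl zero_le_one
  have h1Y : IntervalIntegrable (fun u => (Real.cos u - 1)/u) volume 1 Y :=
    cosm1_intInt zero_le_one hY
  have hne : ∀ x ∈ Set.uIcc (1:ℝ) Y, x ≠ 0 := by
    intro x hx
    rw [Set.uIcc_of_le hY] at hx
    exact ne_of_gt (lt_of_lt_of_le one_pos hx.1)
  have hadd : Phi 1 + ∫ u in (1:ℝ)..Y, (Real.cos u - 1)/u = Phi Y :=
    intervalIntegral.integral_add_adjacent_intervals h01 h1Y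
  have hc1 : IntervalIntegrable (fun u : ℝ => Real.cos u / u) volume 1 Y :=
    (Real.continuous_cos.continuousOn.div continuousOn_id hne).intervalIntegrable
  have hc2 : IntervalIntegrable (fun u : ℝ => u⁻¹) volume 1 Y :=
    (continuousOn_id.inv₀ hne).intervalIntegrable
  have hsplit : ∫ u in (1:ℝ)..Y, (Real.cos u - 1)/u
      = (∫ u in (1:ℝ)..Y, Real.cos u / u) - ∫ u in (1:ℝ)..Y, u⁻¹ := by
    rw [← intervalIntegral.integral_sub hc1 hc2]
    apply intervalIntegral.integral_congr
    intro x hx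
    have hx0 := hne x hx
    field_simp
  rw [← hadd, hsplit, integral_inv_of_pos one_pos hY0, div_one]
  ring

lemma fru {b : ℝ} (hb : 0 < b) :
    Tendsto (fun X : ℝ => ∫ t in (0:ℝ)..X, (Real.cos (b*t) - Real.cos t)/t) atTop
      (nhds (-Real.log b)) := by
  obtain ⟨L, hL⟩ := cosdiv_tendsto
  have key : ∀ X : ℝ, 0 ≤ X →
      ∫ t in (0:ℝ)..X, (Real.cos (b*t) - Real.cos t)/t = Phi (b*X) - Phi X := by
    intro X hX
    have hi1 : IntervalIntegrable (fun t => (Real.cos (b*t) - 1)/t) volume 0 X := by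
      apply intInt ((((Real.continuous_cos.comp (continuous_const.mul continuous_id)).sub
        continuous_const).measurable).div measurable_id) hX (C := b^2 * X / 2)
      intro t ht
      have ht0 : (0:ℝ) < t := ht.1
      show |(Real.cos (b * t) - 1) / t| ≤ _
      rw [abs_div, abs_of_pos ht0, div_le_iff₀ ht0]
      calc |Real.cos (b*t) - 1| ≤ (b*t)^2/2 := cos_sub_one_abs_le (b*t)
        _ = (b^2 * t/2) * t := by ring
        _ ≤ (b^2 * X/2) * t := by nlinarith [mul_le_mul_of_nonneg_right ht.2 ht0.le, sq_nonneg b]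
    have hi2 : IntervalIntegrable (fun t => (Real.cos t - 1)/t) volume 0 X :=
      cosm1_intInt le_rfl hX
    have hsplit : (fun t : ℝ => (Real.cos (b*t) - Real.cos t)/t)
        = fun t => (Real.cos (b*t) - 1)/t - (Real.cos t - 1)/t := by
      funext t
      rw [show Real.cos (b*t) - Real.cos t = (Real.cos (b*t) - 1) - (Real.cos t - 1) by ring,
        sub_div]
    rw [hsplit, intervalIntegral.integral_sub hi1 hi2]
    have h1 : ∫ t in (0:ℝ)..X, (Real.cos (b*t) - 1)/t = Phi (b*X) := by
      have hptw : ∀ t : ℝ, (Real.cos (b*t) - 1)/t = b * ((Real.cos (b*t) - 1)/(b*t)) := by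
        intro t
        rcases eq_or_ne t 0 with rfl | ht
        · simp
        · field_simp
      simp_rw [hptw]
      rw [intervalIntegral.integral_const_mul]
      rw [intervalIntegral.integral_comp_mul_left (fun u => (Real.cos u - 1)/u) (ne_of_gt hb)]
      rw [mul_zero, smul_eq_mul, ← mul_assoc, mul_inv_cancel₀ (ne_of_gt hb), one_mul]
      rfl
    rw [h1]
    rfl
  have hbX : Tendsto (fun X : ℝ => b * X) atTop atTop :=
    Tendsto.const_mul_atTop hb tendsto_id
  have htail : Tendsto (fun X : ℝ =>
      ((∫ u in (1:ℝ)..(b*X), Real.cos u / u) - ∫ u in (1:ℝ)..X, Real.cos u / u) - Real.log b)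
      atTop (nhds (-Real.log b)) := by
    have : Tendsto (fun X : ℝ => (∫ u in (1:ℝ)..(b*X), Real.cos u / u)) atTop (nhds L) :=
      hL.comp hbX
    have h2 := (this.sub hL).sub (tendsto_const_nhds (x := Real.log b))
    simpa using h2
  apply Tendsto.congr' _ htail
  filter_upwards [eventually_ge_atTop (1:ℝ), eventually_ge_atTop b⁻¹] with X hX1 hXb
  have hX0 : (0:ℝ) ≤ X := le_trans zero_le_one hX1
  have hbX1 : (1:ℝ) ≤ b * X := by
    rw [← mul_inv_cancel₀ (ne_of_gt hb)]
    exact mul_le_mul_of_nonneg_left hXb (le_of_lt hb)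
  rw [key X hX0, Phi_eq hbX1, Phi_eq hX1,
    Real.log_mul (ne_of_gt hb) (ne_of_gt (lt_of_lt_of_le one_pos hX1))]
  ring

noncomputable section Core

open Complex (I)

variable (s : Finset ℕ) (γ β : ℕ → ℝ)

/-- complex trig sum, `j`-th derivative level -/
def Hc (j : ℕ) (t : ℝ) : ℂ :=
  ∑ i ∈ s, (γ i : ℂ) * ((β i : ℂ) * I) ^ j * Complex.exp ((β i : ℂ) * t * I)

def gr (j : ℕ) (t : ℝ) : ℝ := (Hc s γ β j t).re

def Bnd (j : ℕ) : ℝ := ∑ i ∈ s, |γ i| * |β i| ^ j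

lemma hasDerivAt_Hc (j : ℕ) (t : ℝ) : HasDerivAt (Hc s γ β j) (Hc s γ β (j+1) t) t := by
  apply HasDerivAt.fun_sum
  intro i _
  have h0 : HasDerivAt (fun t : ℝ => ((β i : ℂ) * t * I)) ((β i : ℂ) * I) t := by
    have h := (Complex.ofRealCLM.hasDerivAt (x := t)).const_mul ((β i : ℂ) * I)
    convert h using 1
    · rfl
    · funext u; simp [Complex.ofRealCLM_apply]; ring
    · simp
  have h2 := (h0.cexp).const_mul ((γ i : ℂ) * ((β i : ℂ) * I) ^ j)
  convert h2 using 1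
  · rfl
  rw [pow_succ]
  ring

lemma hasDerivAt_gr (j : ℕ) (t : ℝ) : HasDerivAt (gr s γ β j) (gr s γ β (j+1) t) t := by
  have h := Complex.reCLM.hasFDerivAt.comp_hasDerivAt t (hasDerivAt_Hc s γ β j t)
  exact h

lemma cont_gr (j : ℕ) : Continuous (gr s γ β j) :=
  continuous_iff_continuousAt.2 fun t => (hasDerivAt_gr s γ β j t).continuousAt

lemma gr_bound (j : ℕ) (t : ℝ) : |gr s γ β j t| ≤ Bnd s γ β j := by
  unfold gr Hc Bnd
  calc |(∑ i ∈ s, (γ i : ℂ) * ((β i : ℂ) * I) ^ j * Complex.exp ((β i : ℂ) * t * I)).re|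
      ≤ ‖∑ i ∈ s, (γ i : ℂ) * ((β i : ℂ) * I) ^ j * Complex.exp ((β i : ℂ) * t * I)‖ :=
        Complex.abs_re_le_norm _
    _ ≤ ∑ i ∈ s, ‖(γ i : ℂ) * ((β i : ℂ) * I) ^ j * Complex.exp ((β i : ℂ) * t * I)‖ :=
        norm_sum_le _ _
    _ = ∑ i ∈ s, |γ i| * |β i| ^ j := by
        apply Finset.sum_congr rfl
        intro i _
        rw [norm_mul, norm_mul, norm_pow, norm_mul]
        have he : ((β i : ℂ) * t * I) = ((β i * t : ℝ) : ℂ) * I := by push_cast; ring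
        rw [he, Complex.norm_exp_ofReal_mul_I, Complex.norm_I, mul_one, mul_one,
          Complex.norm_real, Complex.norm_real, Real.norm_eq_abs, Real.norm_eq_abs]

lemma gr_zero (p : ℕ) (hmom : ∀ r ≤ p, ∑ i ∈ s, γ i * β i ^ (2*r) = 0)
    (j : ℕ) (hj : j ≤ 2*p) : gr s γ β j 0 = 0 := by
  unfold gr Hc
  simp only [Complex.ofReal_zero]
  have hfold : (∑ i ∈ s, (γ i : ℂ) * ((β i : ℂ) * I) ^ j * Complex.exp ((β i : ℂ) * 0 * I))
      = ((∑ i ∈ s, γ i * β i ^ j : ℝ) : ℂ) * I ^ j := by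
    push_cast
    rw [Finset.sum_mul]
    apply Finset.sum_congr rfl
    intro i _
    rw [mul_zero, zero_mul, Complex.exp_zero, mul_one, mul_pow]
    ring
  rw [hfold]
  rcases Nat.even_or_odd j with ⟨r, hr⟩ | ⟨r, hr⟩
  · have hI : I ^ j = ((-1 : ℂ)) ^ r := by
      rw [hr, ← two_mul, pow_mul, Complex.I_sq]
    have hm : ∑ i ∈ s, γ i * β i ^ j = 0 := by
      rw [hr, ← two_mul]
      exact hmom r (by omega)
    rw [hI, hm]
    simp
  · rw [Complex.re_ofReal_mul]
    have hre : (I ^ j).re = 0 := by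
      rw [hr, pow_succ, pow_mul, Complex.I_sq]
      have hc : ((-1 : ℂ)) ^ r = ((-1 : ℝ) ^ r : ℂ) := by norm_cast
      rw [hc, ← Complex.ofReal_pow, Complex.re_ofReal_mul, Complex.I_re, mul_zero]
    rw [hre, mul_zero]

lemma gr_order (p : ℕ) (hmom : ∀ r ≤ p, ∑ i ∈ s, γ i * β i ^ (2*r) = 0) :
    ∀ d, d ≤ 2*p+1 → ∀ t : ℝ, 0 ≤ t →
      |gr s γ β (2*p+1-d) t| ≤ Bnd s γ β (2*p+1) * t ^ d / (d.factorial : ℝ) := by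
  intro d
  induction d with
  | zero => intro _ t _; simpa using gr_bound s γ β (2*p+1) t
  | succ d ih =>
    intro hd t ht
    have hd' : d ≤ 2*p+1 := by omega
    have hj : 2*p+1-(d+1) ≤ 2*p := by omega
    have hj1 : (2*p+1-(d+1)) + 1 = 2*p+1-d := by omega
    have hftc : gr s γ β (2*p+1-(d+1)) t
        = ∫ u in (0:ℝ)..t, gr s γ β (2*p+1-d) u := by
      have h := intervalIntegral.integral_eq_sub_of_hasDerivAt
        (f := gr s γ β (2*p+1-(d+1))) (f' := gr s γ β (2*p+1-d))
        (fun x _ => by rw [← hj1]; exact hasDerivAt_gr s γ β _ x)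
        ((cont_gr s γ β (2*p+1-d)).intervalIntegrable 0 t)
      rw [h, gr_zero s γ β p hmom _ hj, sub_zero]
    rw [hftc]
    have habs : |∫ u in (0:ℝ)..t, gr s γ β (2*p+1-d) u|
        ≤ ∫ u in (0:ℝ)..t, |gr s γ β (2*p+1-d) u| := by
      apply intervalIntegral.abs_integral_le_integral_abs ht
    have hmono : ∫ u in (0:ℝ)..t, |gr s γ β (2*p+1-d) u|
        ≤ ∫ u in (0:ℝ)..t, Bnd s γ β (2*p+1) * u ^ d / (d.factorial : ℝ) := by
      apply intervalIntegral.integral_mono_on ht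
      · exact ((cont_gr s γ β (2*p+1-d)).abs).intervalIntegrable 0 t
      · exact (((continuous_const.mul (continuous_pow d)).div_const _)).intervalIntegrable 0 t
      · intro u hu
        exact ih hd' u hu.1
    have hval : ∫ u in (0:ℝ)..t, Bnd s γ β (2*p+1) * u ^ d / (d.factorial : ℝ)
        = Bnd s γ β (2*p+1) * t ^ (d+1) / ((d+1).factorial : ℝ) := by
      have : (fun u : ℝ => Bnd s γ β (2*p+1) * u ^ d / (d.factorial : ℝ))
          = fun u : ℝ => (Bnd s γ β (2*p+1) / (d.factorial : ℝ)) * u ^ d := by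
        funext u; ring
      rw [this, intervalIntegral.integral_const_mul, integral_pow]
      have hfac : ((d+1).factorial : ℝ) = (d+1) * (d.factorial : ℝ) := by
        rw [Nat.factorial_succ]; push_cast; ring
      rw [hfac, zero_pow (Nat.succ_ne_zero d), sub_zero,
        div_mul_div_comm, mul_comm ((d.factorial : ℝ)) ((d:ℝ)+1)]
    calc |∫ u in (0:ℝ)..t, gr s γ β (2*p+1-d) u|
        ≤ ∫ u in (0:ℝ)..t, |gr s γ β (2*p+1-d) u| := habs
      _ ≤ ∫ u in (0:ℝ)..t, Bnd s γ β (2*p+1) * u ^ d / (d.factorial : ℝ) := hmono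
      _ = Bnd s γ β (2*p+1) * t ^ (d+1) / ((d+1).factorial : ℝ) := hval

end Core


lemma alg_helper {c : ℝ} (hc : c ≠ 0) (f N S D J : ℝ) :
    S + (c*f)/N * (D/c + 1/c*J) = S + f/N*D + f/N*J := by
  have hcc : c * c⁻¹ = 1 := mul_inv_cancel₀ hc
  field_simp
  linear_combination

noncomputable section Core2

open Complex (I)

variable (s : Finset ℕ) (γ β : ℕ → ℝ)

lemma ibp_step (j k : ℕ) {ε X : ℝ} (hε : 0 < ε) (hεX : ε ≤ X) :
    ∫ t in ε..X, gr s γ β j t / t ^ (k+2)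
      = (gr s γ β j ε / ε ^ (k+1) - gr s γ β j X / X ^ (k+1)) / ((k:ℝ)+1)
        + (1/((k:ℝ)+1)) * ∫ t in ε..X, gr s γ β (j+1) t / t ^ (k+1) := by
  have hε' : ε ≠ 0 := ne_of_gt hε
  have hX' : X ≠ 0 := ne_of_gt (lt_of_lt_of_le hε hεX)
  have hk1 : ((k:ℝ)+1) ≠ 0 := by positivity
  have hne : ∀ x ∈ Set.uIcc ε X, x ≠ 0 := by
    intro x hx
    rw [Set.uIcc_of_le hεX] at hx
    exact ne_of_gt (lt_of_lt_of_le hε hx.1)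
  set v : ℝ → ℝ := fun t => -((t ^ (k+1))⁻¹ / ((k:ℝ)+1)) with hv_def
  have hv : ∀ x ∈ Set.Ioo (min ε X) (max ε X), HasDerivAt v ((x ^ (k+2))⁻¹) x := by
    intro x hx
    rw [min_eq_left hεX, max_eq_right hεX] at hx
    have hx0 : x ≠ 0 := ne_of_gt (lt_trans hε hx.1)
    have h1 : HasDerivAt (fun t : ℝ => (t ^ (k+1))⁻¹)
        (-(((k:ℝ)+1) * x ^ k) / (x ^ (k+1)) ^ 2) x := by
      have := (hasDerivAt_pow (k+1) x).fun_inv (pow_ne_zero _ hx0)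
      refine this.congr_deriv ?_
      push_cast
      ring
    have h2 := (h1.div_const (((k:ℝ)+1))).fun_neg
    refine h2.congr_deriv ?_
    field_simp
    ring
  have hu : ∀ x ∈ Set.Ioo (min ε X) (max ε X), HasDerivAt (gr s γ β j) (gr s γ β (j+1) x) x :=
    fun x _ => hasDerivAt_gr s γ β j x
  have hvcont : ContinuousOn v (Set.uIcc ε X) := by
    apply ContinuousOn.neg
    apply ContinuousOn.div_const
    exact ContinuousOn.inv₀ (continuousOn_pow (k+1)) (fun x hx => pow_ne_zero _ (hne x hx))
  have hiu : IntervalIntegrable (gr s γ β (j+1)) volume ε X :=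
    (cont_gr s γ β (j+1)).intervalIntegrable ε X
  have hiv : IntervalIntegrable (fun x : ℝ => (x ^ (k+2))⁻¹) volume ε X :=
    (ContinuousOn.inv₀ (continuousOn_pow (k+2))
      (fun x hx => pow_ne_zero _ (hne x hx))).intervalIntegrable
  have key := intervalIntegral.integral_mul_deriv_eq_deriv_mul_of_hasDerivAt
    (u := gr s γ β j) (v := v) (u' := gr s γ β (j+1)) (v' := fun x => (x ^ (k+2))⁻¹)
    ((cont_gr s γ β j).continuousOn) hvcont hu hv hiu hiv
  have hL : ∫ t in ε..X, gr s γ β j t / t ^ (k+2) = ∫ t in ε..X, gr s γ β j t * (t ^ (k+2))⁻¹ := by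
    apply intervalIntegral.integral_congr
    intro x _
    show gr s γ β j x / x ^ (k+2) = gr s γ β j x * (x ^ (k+2))⁻¹
    rw [div_eq_mul_inv]
  rw [hL, key]
  have hR : ∫ t in ε..X, gr s γ β (j+1) t * v t
      = (-1/((k:ℝ)+1)) * ∫ t in ε..X, gr s γ β (j+1) t / t ^ (k+1) := by
    rw [← intervalIntegral.integral_const_mul]
    apply intervalIntegral.integral_congr
    intro x _
    show gr s γ β (j+1) x * v x = -1/((k:ℝ)+1) * (gr s γ β (j+1) x / x ^ (k+1))
    rw [hv_def]
    field_simp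
  rw [hR, hv_def]
  field_simp
  ring

lemma chain (p : ℕ) {ε X : ℝ} (hε : 0 < ε) (hεX : ε ≤ X) :
    ∀ r, r ≤ 2*p →
    ∫ t in ε..X, gr s γ β 0 t / t ^ (2*p+1)
      = (∑ j ∈ Finset.range r, ((2*p-1-j).factorial : ℝ)/((2*p).factorial : ℝ)
            * (gr s γ β j ε / ε ^ (2*p-j) - gr s γ β j X / X ^ (2*p-j)))
        + ((2*p-r).factorial : ℝ)/((2*p).factorial : ℝ)
            * ∫ t in ε..X, gr s γ β r t / t ^ (2*p+1-r) := by
  intro r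
  induction r with
  | zero =>
    intro _
    simp only [Finset.range_zero, Finset.sum_empty, Nat.sub_zero, zero_add]
    rw [div_self (by exact_mod_cast Nat.factorial_ne_zero (2*p)), one_mul]
  | succ r ih =>
    intro hr
    have hr' : r ≤ 2*p := by omega
    rw [ih hr']
    have e1 : 2*p+1-r = (2*p-r-1)+2 := by omega
    have e2 : 2*p-r = (2*p-r-1)+1 := by omega
    have e3 : 2*p-1-r = 2*p-r-1 := by omega
    have e4 : 2*p+1-(r+1) = 2*p-r := by omega
    have e5 : 2*p-(r+1) = 2*p-r-1 := by omega
    have hfac : ((2*p-r).factorial : ℝ)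
        = (((2*p-r-1 : ℕ) : ℝ) + 1) * ((2*p-r-1).factorial : ℝ) := by
      rw [e2, Nat.factorial_succ]
      push_cast
      ring
    have hne2 : ((2*p-r-1 : ℕ) : ℝ) + 1 ≠ 0 := by positivity
    rw [e1, ibp_step s γ β r (2*p-r-1) hε hεX, ← e2, Finset.sum_range_succ, e3, e4, e5, hfac]
    exact alg_helper hne2 _ _ _ _ _
end Core2

noncomputable section Core3

variable (s : Finset ℕ) (γ β : ℕ → ℝ)

lemma quot_bound (p : ℕ) (hmom : ∀ r ≤ p, ∑ i ∈ s, γ i * β i ^ (2*r) = 0)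
    (j : ℕ) (hj : j ≤ 2*p+1) {t : ℝ} (ht : 0 < t) :
    |gr s γ β j t / t ^ (2*p+1-j)| ≤ Bnd s γ β (2*p+1) / (((2*p+1-j).factorial : ℝ)) := by
  have h1 := gr_order s γ β p hmom (2*p+1-j) (by omega) t ht.le
  rw [show 2*p+1-(2*p+1-j) = j by omega] at h1
  have hfp : (0:ℝ) < ((2*p+1-j).factorial : ℝ) := by exact_mod_cast Nat.factorial_pos _
  rw [abs_div, abs_of_pos (pow_pos ht _), div_le_div_iff₀ (pow_pos ht _) hfp]
  calc |gr s γ β j t| * ((2*p+1-j).factorial : ℝ)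
      ≤ (Bnd s γ β (2*p+1) * t ^ (2*p+1-j) / ((2*p+1-j).factorial : ℝ))
          * ((2*p+1-j).factorial : ℝ) := by
        apply mul_le_mul_of_nonneg_right h1 hfp.le
    _ = Bnd s γ β (2*p+1) * t ^ (2*p+1-j) := by field_simp

lemma quot_intInt (p : ℕ) (hmom : ∀ r ≤ p, ∑ i ∈ s, γ i * β i ^ (2*r) = 0)
    (j : ℕ) (hj : j ≤ 2*p+1) {a b : ℝ} (h0 : 0 ≤ a) (hab : a ≤ b) :
    IntervalIntegrable (fun t => gr s γ β j t / t ^ (2*p+1-j)) volume a b := by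
  apply intInt ((cont_gr s γ β j).measurable.div ((continuous_pow _).measurable)) hab
    (C := Bnd s γ β (2*p+1) / (((2*p+1-j).factorial : ℝ)))
  intro t htmem
  exact quot_bound s γ β p hmom j hj (lt_of_le_of_lt h0 htmem.1)

lemma tendsto_int_eps (p : ℕ) (hmom : ∀ r ≤ p, ∑ i ∈ s, γ i * β i ^ (2*r) = 0)
    (j : ℕ) (hj : j ≤ 2*p+1) {X : ℝ} (hX : 0 < X) :
    Tendsto (fun ε => ∫ t in ε..X, gr s γ β j t / t ^ (2*p+1-j)) (nhdsWithin 0 (Set.Ioi 0))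
      (nhds (∫ t in (0:ℝ)..X, gr s γ β j t / t ^ (2*p+1-j))) := by
  set C := Bnd s γ β (2*p+1) / (((2*p+1-j).factorial : ℝ)) with hC
  have hsmall : Tendsto (fun ε => ∫ t in (0:ℝ)..ε, gr s γ β j t / t ^ (2*p+1-j))
      (nhdsWithin 0 (Set.Ioi 0)) (nhds 0) := by
    have hCg : Tendsto (fun ε : ℝ => C * ε) (nhdsWithin 0 (Set.Ioi 0)) (nhds 0) := by
      have h0 : Tendsto (fun ε : ℝ => C * ε) (nhds 0) (nhds 0) := by
        simpa using ((tendsto_id : Tendsto id (nhds (0:ℝ)) (nhds 0)).const_mul C)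
      exact h0.mono_left nhdsWithin_le_nhds
    apply squeeze_zero_norm' ?_ hCg
    · filter_upwards [self_mem_nhdsWithin] with ε (hε : ε ∈ Set.Ioi (0:ℝ))
      rw [Set.mem_Ioi] at hε
      have hb := intervalIntegral.norm_integral_le_of_norm_le_const
        (C := C) (a := (0:ℝ)) (b := ε)
        (f := fun t => gr s γ β j t / t ^ (2*p+1-j)) ?_
      · calc ‖∫ t in (0:ℝ)..ε, gr s γ β j t / t ^ (2*p+1-j)‖ ≤ C * |ε - 0| := hb
          _ = C * ε := by rw [sub_zero, abs_of_pos hε]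
      · intro x hx
        rw [Set.uIoc_of_le hε.le] at hx
        rw [Real.norm_eq_abs]
        exact quot_bound s γ β p hmom j hj hx.1
  have hev : ∀ᶠ ε in nhdsWithin (0:ℝ) (Set.Ioi 0),
      ∫ t in ε..X, gr s γ β j t / t ^ (2*p+1-j)
        = (∫ t in (0:ℝ)..X, gr s γ β j t / t ^ (2*p+1-j))
          - ∫ t in (0:ℝ)..ε, gr s γ β j t / t ^ (2*p+1-j) := by
    filter_upwards [Ioo_mem_nhdsGT_of_mem (Set.mem_Ico.2 ⟨le_rfl, hX⟩)] with ε hε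
    have h1 : IntervalIntegrable (fun t => gr s γ β j t / t ^ (2*p+1-j)) volume 0 ε :=
      quot_intInt s γ β p hmom j hj le_rfl hε.1.le
    have h2 : IntervalIntegrable (fun t => gr s γ β j t / t ^ (2*p+1-j)) volume ε X :=
      quot_intInt s γ β p hmom j hj hε.1.le hε.2.le
    rw [← intervalIntegral.integral_add_adjacent_intervals h1 h2]
    ring
  have := (tendsto_const_nhds (x := ∫ t in (0:ℝ)..X, gr s γ β j t / t ^ (2*p+1-j))
    (f := nhdsWithin (0:ℝ) (Set.Ioi 0))).sub hsmall
  rw [sub_zero] at this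
  exact Tendsto.congr' (by filter_upwards [hev] with ε h using h.symm) this

lemma tendsto_boundary (p : ℕ) (hmom : ∀ r ≤ p, ∑ i ∈ s, γ i * β i ^ (2*r) = 0)
    (j : ℕ) (hj : j ≤ 2*p) :
    Tendsto (fun ε => gr s γ β j ε / ε ^ (2*p-j)) (nhdsWithin 0 (Set.Ioi 0)) (nhds 0) := by
  set C := Bnd s γ β (2*p+1) / (((2*p+1-j).factorial : ℝ)) with hC
  have hCg : Tendsto (fun ε : ℝ => C * ε) (nhdsWithin 0 (Set.Ioi 0)) (nhds 0) := by
    have h0 : Tendsto (fun ε : ℝ => C * ε) (nhds 0) (nhds 0) := by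
      simpa using ((tendsto_id : Tendsto id (nhds (0:ℝ)) (nhds 0)).const_mul C)
    exact h0.mono_left nhdsWithin_le_nhds
  apply squeeze_zero_norm' ?_ hCg
  · filter_upwards [self_mem_nhdsWithin] with ε (hε : ε ∈ Set.Ioi (0:ℝ))
    rw [Set.mem_Ioi] at hε
    have key : gr s γ β j ε / ε ^ (2*p-j) = (gr s γ β j ε / ε ^ (2*p+1-j)) * ε := by
      rw [show 2*p+1-j = (2*p-j)+1 by omega, pow_succ]
      field_simp
    rw [key, Real.norm_eq_abs, abs_mul, abs_of_pos hε]
    exact mul_le_mul_of_nonneg_right (quot_bound s γ β p hmom j (by omega) hε) hε.le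

lemma piste (p : ℕ) (hmom : ∀ r ≤ p, ∑ i ∈ s, γ i * β i ^ (2*r) = 0)
    {X : ℝ} (hX : 0 < X) :
    ∫ t in (0:ℝ)..X, gr s γ β 0 t / t ^ (2*p+1)
      = -(∑ j ∈ Finset.range (2*p), ((2*p-1-j).factorial : ℝ)/((2*p).factorial : ℝ)
            * (gr s γ β j X / X ^ (2*p-j)))
        + (1/((2*p).factorial : ℝ)) * ∫ t in (0:ℝ)..X, gr s γ β (2*p) t / t ^ 1 := by
  have hbot : (nhdsWithin (0:ℝ) (Set.Ioi 0)).NeBot := nhdsGT_neBot 0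
  apply tendsto_nhds_unique
    (f := fun ε => ∫ t in ε..X, gr s γ β 0 t / t ^ (2*p+1)) (l := nhdsWithin 0 (Set.Ioi 0))
  · have h := tendsto_int_eps s γ β p hmom 0 (by omega) hX
    simpa using h
  · have hchain : ∀ᶠ ε in nhdsWithin (0:ℝ) (Set.Ioi 0),
        ∫ t in ε..X, gr s γ β 0 t / t ^ (2*p+1)
          = (∑ j ∈ Finset.range (2*p), ((2*p-1-j).factorial : ℝ)/((2*p).factorial : ℝ)
                * (gr s γ β j ε / ε ^ (2*p-j) - gr s γ β j X / X ^ (2*p-j)))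
            + ((2*p-2*p).factorial : ℝ)/((2*p).factorial : ℝ)
                * ∫ t in ε..X, gr s γ β (2*p) t / t ^ (2*p+1-2*p) := by
      filter_upwards [Ioo_mem_nhdsGT_of_mem (Set.mem_Ico.2 ⟨le_rfl, hX⟩)] with ε hε
      exact chain s γ β p hε.1 hε.2.le (2*p) le_rfl
    have hsum : Tendsto (fun ε => ∑ j ∈ Finset.range (2*p),
        ((2*p-1-j).factorial : ℝ)/((2*p).factorial : ℝ)
          * (gr s γ β j ε / ε ^ (2*p-j) - gr s γ β j X / X ^ (2*p-j)))
        (nhdsWithin 0 (Set.Ioi 0))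
        (nhds (∑ j ∈ Finset.range (2*p), ((2*p-1-j).factorial : ℝ)/((2*p).factorial : ℝ)
          * (0 - gr s γ β j X / X ^ (2*p-j)))) := by
      apply tendsto_finset_sum
      intro j hj
      rw [Finset.mem_range] at hj
      exact Tendsto.const_mul _
        ((tendsto_boundary s γ β p hmom j (by omega)).sub tendsto_const_nhds)
    have hint : Tendsto (fun ε => ((2*p-2*p).factorial : ℝ)/((2*p).factorial : ℝ)
        * ∫ t in ε..X, gr s γ β (2*p) t / t ^ (2*p+1-2*p))
        (nhdsWithin 0 (Set.Ioi 0))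
        (nhds (((2*p-2*p).factorial : ℝ)/((2*p).factorial : ℝ)
          * ∫ t in (0:ℝ)..X, gr s γ β (2*p) t / t ^ (2*p+1-2*p))) :=
      Tendsto.const_mul _ (tendsto_int_eps s γ β p hmom (2*p) (by omega) hX)
    have hfinal := hsum.add hint
    have hval : (∑ j ∈ Finset.range (2*p), ((2*p-1-j).factorial : ℝ)/((2*p).factorial : ℝ)
          * (0 - gr s γ β j X / X ^ (2*p-j)))
        + ((2*p-2*p).factorial : ℝ)/((2*p).factorial : ℝ)
          * ∫ t in (0:ℝ)..X, gr s γ β (2*p) t / t ^ (2*p+1-2*p)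
        = -(∑ j ∈ Finset.range (2*p), ((2*p-1-j).factorial : ℝ)/((2*p).factorial : ℝ)
            * (gr s γ β j X / X ^ (2*p-j)))
          + (1/((2*p).factorial : ℝ)) * ∫ t in (0:ℝ)..X, gr s γ β (2*p) t / t ^ 1 := by
      rw [show 2*p+1-2*p = 1 by omega, Nat.sub_self, Nat.factorial_zero, Nat.cast_one]
      congr 1
      rw [← Finset.sum_neg_distrib]
      apply Finset.sum_congr rfl
      intro j _
      ring
    rw [← hval]
    exact Tendsto.congr' (by filter_upwards [hchain] with ε h using h.symm) hfinal

end Core3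

noncomputable section Core4

open Complex (I)

variable (s : Finset ℕ) (γ β : ℕ → ℝ)

lemma gr_top_formula (p : ℕ) (t : ℝ) :
    gr s γ β (2*p) t = ∑ i ∈ s, ((-1:ℝ)^p * γ i * β i ^ (2*p)) * Real.cos (β i * t) := by
  unfold gr Hc
  rw [Complex.re_sum]
  apply Finset.sum_congr rfl
  intro i _
  have h1 : ((β i : ℂ) * I) ^ (2*p) = (((-1:ℝ)^p * β i ^ (2*p) : ℝ) : ℂ) := by
    rw [mul_pow, show I^(2*p) = ((-1:ℂ))^p by rw [pow_mul, Complex.I_sq]]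
    push_cast
    ring
  have h2 : ((β i : ℂ) * (t:ℝ) * I) = ((β i * t : ℝ) : ℂ) * I := by push_cast; ring
  rw [h1, h2, ← Complex.ofReal_mul, Complex.re_ofReal_mul, Complex.exp_ofReal_mul_I_re]
  ring

lemma cos_diff_intInt (b : ℝ) {X : ℝ} (hX : 0 ≤ X) :
    IntervalIntegrable (fun t => (Real.cos (b * t) - Real.cos t) / t) volume 0 X := by
  apply intInt (((Real.continuous_cos.comp (continuous_const.mul continuous_id)).sub
    Real.continuous_cos).measurable.div measurable_id) hX (C := (b^2 + 1) * X / 2)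
  intro t ht
  have ht0 : (0:ℝ) < t := ht.1
  show |(Real.cos (b * t) - Real.cos t) / t| ≤ _
  rw [abs_div, abs_of_pos ht0, div_le_iff₀ ht0]
  calc |Real.cos (b*t) - Real.cos t|
      ≤ |Real.cos (b*t) - 1| + |Real.cos t - 1| := by
        have : Real.cos (b*t) - Real.cos t = (Real.cos (b*t) - 1) - (Real.cos t - 1) := by ring
        rw [this]
        exact abs_sub _ _
    _ ≤ (b*t)^2/2 + t^2/2 := add_le_add (cos_sub_one_abs_le _) (cos_sub_one_abs_le _)
    _ = ((b^2+1) * t / 2) * t := by ring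
    _ ≤ ((b^2+1) * X / 2) * t := by nlinarith [mul_le_mul_of_nonneg_right ht.2 ht0.le, sq_nonneg b]

lemma int_gr_top (p : ℕ) (hp : 1 ≤ p) (hmom : ∀ r ≤ p, ∑ i ∈ s, γ i * β i ^ (2*r) = 0)
    {X : ℝ} (hX : 0 ≤ X) :
    ∫ t in (0:ℝ)..X, gr s γ β (2*p) t / t ^ 1
      = ∑ i ∈ s, ((-1:ℝ)^p * γ i * β i ^ (2*p))
          * ∫ t in (0:ℝ)..X, (Real.cos (β i * t) - Real.cos t) / t := by
  have hd0 : ∑ i ∈ s, ((-1:ℝ)^p * γ i * β i ^ (2*p)) = 0 := by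
    calc ∑ i ∈ s, ((-1:ℝ)^p * γ i * β i ^ (2*p))
        = (-1:ℝ)^p * ∑ i ∈ s, γ i * β i ^ (2*p) := by
          rw [Finset.mul_sum]
          apply Finset.sum_congr rfl
          intro i _
          ring
      _ = 0 := by rw [hmom p le_rfl, mul_zero]
  have hae : ∀ᵐ x : ℝ ∂volume, x ≠ 0 := by
    rw [MeasureTheory.ae_iff]
    simpa using Real.volume_singleton (x := (0:ℝ))
  have hptw : ∀ᵐ x : ℝ ∂volume, x ∈ Set.uIoc 0 X →
      gr s γ β (2*p) x / x ^ 1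
        = ∑ i ∈ s, ((-1:ℝ)^p * γ i * β i ^ (2*p)) * ((Real.cos (β i * x) - Real.cos x) / x) := by
    filter_upwards [hae] with x hx _
    rw [gr_top_formula, pow_one, Finset.sum_div]
    have hterm : ∀ i ∈ s, (((-1:ℝ)^p * γ i * β i ^ (2*p)) * Real.cos (β i * x)) / x
        = ((-1:ℝ)^p * γ i * β i ^ (2*p)) * ((Real.cos (β i * x) - Real.cos x) / x)
          + ((-1:ℝ)^p * γ i * β i ^ (2*p)) * (Real.cos x / x) := by
      intro i _
      field_simp
      ring
    rw [Finset.sum_congr rfl hterm, Finset.sum_add_distrib, ← Finset.sum_mul, hd0, zero_mul,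
      add_zero]
  rw [intervalIntegral.integral_congr_ae hptw, intervalIntegral.integral_finset_sum]
  · apply Finset.sum_congr rfl
    intro i _
    rw [intervalIntegral.integral_const_mul]
  · intro i _
    exact (cos_diff_intInt (β i) hX).const_mul _

theorem core (p : ℕ) (hp : 1 ≤ p) (hmom : ∀ r ≤ p, ∑ i ∈ s, γ i * β i ^ (2*r) = 0) :
    Tendsto (fun X : ℝ => ∫ t in (0:ℝ)..X, gr s γ β 0 t / t ^ (2*p+1)) atTop
      (nhds ((1/((2*p).factorial : ℝ)) *
        ∑ i ∈ s, -((-1:ℝ)^p * γ i * β i ^ (2*p) * Real.log |β i|))) := by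
  -- limit of the boundary terms
  have hbd : Tendsto (fun X : ℝ => -(∑ j ∈ Finset.range (2*p),
      ((2*p-1-j).factorial : ℝ)/((2*p).factorial : ℝ) * (gr s γ β j X / X ^ (2*p-j))))
      atTop (nhds 0) := by
    have : Tendsto (fun X : ℝ => ∑ j ∈ Finset.range (2*p),
        ((2*p-1-j).factorial : ℝ)/((2*p).factorial : ℝ) * (gr s γ β j X / X ^ (2*p-j)))
        atTop (nhds (∑ j ∈ Finset.range (2*p), ((2*p-1-j).factorial : ℝ)/((2*p).factorial : ℝ) * 0)) := by
      apply tendsto_finset_sum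
      intro j hj
      rw [Finset.mem_range] at hj
      apply Tendsto.const_mul
      have hpow : Tendsto (fun X : ℝ => X ^ (2*p-j)) atTop atTop :=
        tendsto_pow_atTop (by omega)
      have hzero : Tendsto (fun X : ℝ => (X ^ (2*p-j))⁻¹) atTop (nhds 0) :=
        hpow.inv_tendsto_atTop
      apply squeeze_zero_norm' ?_ (by simpa using hzero.const_mul (Bnd s γ β j))
      filter_upwards [eventually_gt_atTop (0:ℝ)] with X hX
      rw [Real.norm_eq_abs, abs_div, abs_of_pos (pow_pos hX _), div_eq_mul_inv]
      exact mul_le_mul_of_nonneg_right (gr_bound s γ β j X) (by positivity)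
    simpa using this.neg
  -- limit of the log part
  have hlog : Tendsto (fun X : ℝ => (1/((2*p).factorial : ℝ))
      * ∫ t in (0:ℝ)..X, gr s γ β (2*p) t / t ^ 1) atTop
      (nhds ((1/((2*p).factorial : ℝ)) *
        ∑ i ∈ s, -((-1:ℝ)^p * γ i * β i ^ (2*p) * Real.log |β i|))) := by
    apply Tendsto.const_mul
    have hsum : Tendsto (fun X : ℝ => ∑ i ∈ s, ((-1:ℝ)^p * γ i * β i ^ (2*p))
        * ∫ t in (0:ℝ)..X, (Real.cos (β i * t) - Real.cos t) / t) atTop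
        (nhds (∑ i ∈ s, -((-1:ℝ)^p * γ i * β i ^ (2*p) * Real.log |β i|))) := by
      apply tendsto_finset_sum
      intro i _
      by_cases hβ : β i = 0
      · have hd : ((-1:ℝ)^p * γ i * β i ^ (2*p)) = 0 := by
          rw [hβ, zero_pow (by omega : 2*p ≠ 0), mul_zero]
        rw [hd]
        simpa using tendsto_const_nhds
      · have hb : 0 < |β i| := abs_pos.2 hβ
        have hcoseq : ∀ X : ℝ, (∫ t in (0:ℝ)..X, (Real.cos (β i * t) - Real.cos t) / t)
            = ∫ t in (0:ℝ)..X, (Real.cos (|β i| * t) - Real.cos t) / t := by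
          intro X
          apply intervalIntegral.integral_congr
          intro x _
          show (Real.cos (β i * x) - Real.cos x)/x = (Real.cos (|β i| * x) - Real.cos x)/x
          rcases abs_choice (β i) with h | h
          · rw [h]
          · rw [h, neg_mul, Real.cos_neg]
        have := (fru hb).const_mul ((-1:ℝ)^p * γ i * β i ^ (2*p))
        rw [mul_neg] at this
        apply Tendsto.congr' ?_ this
        filter_upwards with X
        rw [hcoseq X]
      done
    apply Tendsto.congr' ?_ hsum
    filter_upwards [eventually_ge_atTop (0:ℝ)] with X hX
    rw [int_gr_top s γ β p hp hmom hX]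
  have hfinal := hbd.add hlog
  rw [zero_add] at hfinal
  apply Tendsto.congr' ?_ hfinal
  filter_upwards [eventually_gt_atTop (0:ℝ)] with X hX
  rw [piste s γ β p hmom hX]

end Core4

lemma fd_step (n : ℕ) (g : ℕ → ℝ) :
    ∑ i ∈ Finset.range (n+2), (-1:ℝ)^i * (((n+1).choose i : ℕ) : ℝ) * g i
      = ∑ i ∈ Finset.range (n+1), (-1:ℝ)^i * ((n.choose i : ℕ) : ℝ) * (g i - g (i+1)) := by
  have hsplit : ∀ i : ℕ, (((n+1).choose (i+1) : ℕ) : ℝ)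
      = ((n.choose i : ℕ) : ℝ) + ((n.choose (i+1) : ℕ) : ℝ) := by
    intro i
    rw [Nat.choose_succ_succ]
    push_cast
    ring
  have hL : ∑ i ∈ Finset.range (n+2), (-1:ℝ)^i * (((n+1).choose i : ℕ) : ℝ) * g i
      = (∑ i ∈ Finset.range (n+1), (-1:ℝ)^(i+1) * (((n+1).choose (i+1) : ℕ) : ℝ) * g (i+1))
        + g 0 := by
    rw [Finset.sum_range_succ']
    simp
  set U := ∑ i ∈ Finset.range (n+1), (-1:ℝ)^i * ((n.choose i : ℕ) : ℝ) * g (i+1) with hU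
  set T := ∑ i ∈ Finset.range (n+1), (-1:ℝ)^i * ((n.choose (i+1) : ℕ) : ℝ) * g (i+1) with hT
  set S := ∑ i ∈ Finset.range (n+1), (-1:ℝ)^i * ((n.choose i : ℕ) : ℝ) * g i with hS
  have h1 : ∑ i ∈ Finset.range (n+1), (-1:ℝ)^(i+1) * (((n+1).choose (i+1) : ℕ) : ℝ) * g (i+1)
      = -U - T := by
    rw [hU, hT, ← Finset.sum_neg_distrib, ← Finset.sum_sub_distrib]
    apply Finset.sum_congr rfl
    intro i _
    rw [hsplit i, pow_succ]
    ring
  have h2 : ∑ i ∈ Finset.range (n+1), (-1:ℝ)^i * ((n.choose i : ℕ) : ℝ) * (g i - g (i+1))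
      = S - U := by
    rw [hS, hU, ← Finset.sum_sub_distrib]
    apply Finset.sum_congr rfl
    intro i _
    ring
  have h3 : T = g 0 - S := by
    have hS2 : S = (∑ i ∈ Finset.range n, (-1:ℝ)^(i+1) * ((n.choose (i+1) : ℕ) : ℝ) * g (i+1))
        + g 0 := by
      rw [hS, Finset.sum_range_succ']
      simp
    have hT2 : T = ∑ i ∈ Finset.range n, (-1:ℝ)^i * ((n.choose (i+1) : ℕ) : ℝ) * g (i+1) := by
      rw [hT, Finset.sum_range_succ, Nat.choose_succ_self, Nat.cast_zero, mul_zero, zero_mul,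
        add_zero]
    have hneg : ∑ i ∈ Finset.range n, (-1:ℝ)^(i+1) * ((n.choose (i+1) : ℕ) : ℝ) * g (i+1)
        = -∑ i ∈ Finset.range n, (-1:ℝ)^i * ((n.choose (i+1) : ℕ) : ℝ) * g (i+1) := by
      rw [← Finset.sum_neg_distrib]
      apply Finset.sum_congr rfl
      intro i _
      rw [pow_succ]
      ring
    rw [hT2, hS2, hneg]
    ring
  rw [hL, h1, h2, h3]
  ring

lemma fd (n : ℕ) (P : Polynomial ℝ) (hP : P.natDegree < n) :
    ∑ i ∈ Finset.range (n+1), (-1:ℝ)^i * ((n.choose i : ℕ) : ℝ) * P.eval (i:ℝ) = 0 := by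
  induction n generalizing P with
  | zero => exact absurd hP (Nat.not_lt_zero _)
  | succ n ih =>
    have hQdef : ∀ x : ℝ, (P - P.comp (Polynomial.X + Polynomial.C 1)).eval x
        = P.eval x - P.eval (x+1) := by
      intro x
      simp [Polynomial.eval_comp]
    set Q := P - P.comp (Polynomial.X + Polynomial.C 1) with hQ
    have key := fd_step n (fun i : ℕ => P.eval (i:ℝ))
    have hcast : ∀ i : ℕ, P.eval (i:ℝ) - P.eval (((i+1:ℕ)):ℝ) = Q.eval (i:ℝ) := by
      intro i
      rw [hQdef (i:ℝ)]
      push_cast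
      ring
    rw [show n+1+1 = n+2 from rfl] at *
    rw [key]
    rcases eq_or_ne P 0 with rfl | hP0
    · simp
    rcases eq_or_ne Q 0 with hQ0 | hQ0
    · apply Finset.sum_eq_zero
      intro i _
      have h0 : P.eval (i:ℝ) - P.eval (((i+1:ℕ)):ℝ) = 0 := by
        rw [hcast i, hQ0]
        simp
      rw [h0, mul_zero]
    · have hX1 : (Polynomial.X + Polynomial.C (1:ℝ)).natDegree = 1 :=
        Polynomial.natDegree_X_add_C 1
      have hcomp_lc : (P.comp (Polynomial.X + Polynomial.C (1:ℝ))).leadingCoeff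
          = P.leadingCoeff := by
        rw [Polynomial.leadingCoeff_comp (by rw [hX1]; omega)]
        rw [Polynomial.leadingCoeff_X_add_C, one_pow, mul_one]
      have hcomp_ne : P.comp (Polynomial.X + Polynomial.C (1:ℝ)) ≠ 0 := by
        rw [← Polynomial.leadingCoeff_ne_zero, hcomp_lc, Polynomial.leadingCoeff_ne_zero]
        exact hP0
      have hcomp_deg : (P.comp (Polynomial.X + Polynomial.C (1:ℝ))).degree = P.degree := by
        rw [Polynomial.degree_eq_natDegree hcomp_ne, Polynomial.degree_eq_natDegree hP0]
        rw [Polynomial.natDegree_comp, hX1, mul_one]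
      have hdlt : Q.degree < P.degree :=
        Polynomial.degree_sub_lt hcomp_deg.symm hP0 hcomp_lc.symm
      have hdeg : Q.natDegree < n := by
        have h1 : Q.natDegree < P.natDegree := Polynomial.natDegree_lt_natDegree hQ0 hdlt
        omega
      have happ := ih Q hdeg
      rw [← happ]
      apply Finset.sum_congr rfl
      intro i _
      rw [hcast i]

lemma gr_zero_formula (s : Finset ℕ) (γ β : ℕ → ℝ) (t : ℝ) :
    gr s γ β 0 t = ∑ i ∈ s, γ i * Real.cos (β i * t) := by
  have h := gr_top_formula s γ β 0 t
  norm_num at h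
  exact h

lemma moments (m r : ℕ) (hr : 2*r < 2*m) :
    ∑ i ∈ Finset.range (2*m+1),
      ((-1:ℝ)^(i+m) * (((2*m).choose i : ℕ) : ℝ) / 4^m) * (2*(i:ℝ) - 2*m)^(2*r) = 0 := by
  set P : Polynomial ℝ :=
    (Polynomial.C 2 * Polynomial.X + Polynomial.C (-(2*(m:ℝ))))^(2*r) with hP
  have hdeg : P.natDegree < 2*m := by
    rw [hP, Polynomial.natDegree_pow, Polynomial.natDegree_linear (two_ne_zero)]
    omega
  have heval : ∀ i : ℕ, P.eval (i:ℝ) = (2*(i:ℝ) - 2*m)^(2*r) := by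
    intro i
    rw [hP]
    simp
    ring_nf
  have hfd := fd (2*m) P hdeg
  calc ∑ i ∈ Finset.range (2*m+1),
        ((-1:ℝ)^(i+m) * (((2*m).choose i : ℕ) : ℝ) / 4^m) * (2*(i:ℝ) - 2*m)^(2*r)
      = ((-1:ℝ)^m/4^m) * ∑ i ∈ Finset.range (2*m+1),
          (-1:ℝ)^i * (((2*m).choose i : ℕ) : ℝ) * P.eval (i:ℝ) := by
        rw [Finset.mul_sum]
        apply Finset.sum_congr rfl
        intro i _
        rw [heval i, pow_add]
        ring
    _ = 0 := by rw [hfd, mul_zero]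

lemma sinFourier (m : ℕ) (t : ℝ) :
    Real.sin t ^ (2*m)
      = ∑ i ∈ Finset.range (2*m+1),
          ((-1:ℝ)^(i+m) * (((2*m).choose i : ℕ) : ℝ) / 4^m)
            * Real.cos ((2*(i:ℝ)-2*m) * t) := by
  have hsin : Complex.exp ((t:ℂ)*Complex.I) - Complex.exp (-(t:ℂ)*Complex.I)
      = 2*Complex.I*Complex.sin (t:ℂ) := by
    rw [Complex.sin]
    linear_combination (Complex.exp ((t:ℂ)*Complex.I) - Complex.exp (-(t:ℂ)*Complex.I))
      * Complex.I_sq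
  have key : (Complex.exp ((t:ℂ)*Complex.I) - Complex.exp (-(t:ℂ)*Complex.I))^(2*m)
      = ∑ i ∈ Finset.range (2*m+1), (-1:ℂ)^i * (((2*m).choose i : ℕ) : ℂ)
          * Complex.exp (((2*(i:ℝ)-2*(m:ℝ) : ℝ) : ℂ) * (t:ℂ) * Complex.I) := by
    rw [sub_pow]
    apply Finset.sum_congr rfl
    intro i hi
    rw [Finset.mem_range] at hi
    have hile : i ≤ 2*m := by omega
    rw [← Complex.exp_nat_mul, ← Complex.exp_nat_mul]
    have harg : (i:ℂ) * ((t:ℂ)*Complex.I) + ((2*m - i : ℕ):ℂ) * (-(t:ℂ)*Complex.I)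
        = ((2*(i:ℝ)-2*(m:ℝ) : ℝ) : ℂ) * (t:ℂ) * Complex.I := by
      push_cast [Nat.cast_sub hile]
      ring
    have hxy : Complex.exp ((i:ℂ) * ((t:ℂ)*Complex.I))
          * Complex.exp (((2*m - i : ℕ):ℂ) * (-(t:ℂ)*Complex.I))
        = Complex.exp (((2*(i:ℝ)-2*(m:ℝ) : ℝ) : ℂ) * (t:ℂ) * Complex.I) := by
      rw [← Complex.exp_add, harg]
    have hsign : (-1:ℂ)^(i + 2*m) = (-1:ℂ)^i := by
      rw [pow_add, pow_mul]
      norm_num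
    rw [hsign]
    linear_combination ((-1:ℂ)^i * (((2*m).choose i : ℕ) : ℂ)) * hxy
  have hpow : (2*Complex.I*Complex.sin (t:ℂ))^(2*m)
      = ((4:ℂ))^m * (-1:ℂ)^m * Complex.sin (t:ℂ)^(2*m) := by
    rw [mul_pow, mul_pow, show ((2:ℂ))^(2*m) = 4^m by rw [pow_mul]; norm_num,
      show Complex.I^(2*m) = (-1:ℂ)^m by rw [pow_mul, Complex.I_sq]]
  have hmm : ((-1:ℂ))^m * ((-1:ℂ))^m = 1 := by
    rw [← pow_add, ← two_mul, pow_mul]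
    norm_num
  have hmain : Complex.sin (t:ℂ)^(2*m)
      = ∑ i ∈ Finset.range (2*m+1), ((-1:ℂ)^(i+m) * (((2*m).choose i : ℕ) : ℂ) / 4^m)
          * Complex.exp (((2*(i:ℝ)-2*(m:ℝ) : ℝ) : ℂ) * (t:ℂ) * Complex.I) := by
    have h4 : ((4:ℂ))^m ≠ 0 := by norm_num
    have hm1 : ((-1:ℂ))^m ≠ 0 := by
      apply pow_ne_zero
      norm_num
    apply mul_left_cancel₀ (mul_ne_zero h4 hm1)
    rw [← hpow, ← hsin, key, Finset.mul_sum]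
    apply Finset.sum_congr rfl
    intro i _
    set E := Complex.exp (((2*(i:ℝ)-2*(m:ℝ) : ℝ) : ℂ) * (t:ℂ) * Complex.I) with hE
    have hstep : ((4:ℂ))^m * (-1:ℂ)^m
          * ((-1:ℂ)^i * (-1:ℂ)^m * (((2*m).choose i : ℕ) : ℂ) / 4^m * E)
        = ((-1:ℂ)^m * (-1:ℂ)^m) * ((-1:ℂ)^i * (((2*m).choose i : ℕ) : ℂ) * E)
          * ((4:ℂ)^m / 4^m) := by
      ring
    rw [pow_add, hstep, hmm, div_self h4, one_mul, mul_one]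
  have hre := congrArg Complex.re hmain
  rw [Complex.re_sum] at hre
  rw [← Complex.ofReal_sin, ← Complex.ofReal_pow, Complex.ofReal_re] at hre
  rw [hre]
  apply Finset.sum_congr rfl
  intro i _
  have hcoef : ((-1:ℂ)^(i+m) * (((2*m).choose i : ℕ) : ℂ) / 4^m)
      = (((-1:ℝ)^(i+m) * (((2*m).choose i : ℕ) : ℝ) / 4^m : ℝ) : ℂ) := by
    push_cast
    ring
  have harg2 : (((2*(i:ℝ)-2*(m:ℝ) : ℝ)):ℂ) * (t:ℂ) * Complex.I
      = (((2*(i:ℝ)-2*(m:ℝ)) * t : ℝ) : ℂ) * Complex.I := by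
    push_cast
    ring
  rw [hcoef, harg2, Complex.re_ofReal_mul, Complex.exp_ofReal_mul_I_re]

lemma sum_fold (m : ℕ) (f : ℕ → ℝ) :
    ∑ i ∈ Finset.range (2*m+1), f i
      = f m + ∑ k ∈ Finset.Icc 1 m, (f (m-k) + f (m+k)) := by
  have hIcc : Finset.Icc 1 m = Finset.Ico 1 (m+1) := (Finset.Ico_add_one_right_eq_Icc 1 m).symm
  have hsplit : ∑ i ∈ Finset.range (2*m+1), f i
      = (∑ i ∈ Finset.range m, f i) + ∑ i ∈ Finset.range (m+1), f (m+i) := by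
    have hIco : ∑ i ∈ Finset.Ico m (2*m+1), f i = ∑ i ∈ Finset.range (m+1), f (m+i) := by
      rw [Finset.sum_Ico_eq_sum_range]
      apply Finset.sum_congr
      · congr 1
        omega
      · intros
        rfl
    rw [Finset.range_eq_Ico,
      ← Finset.sum_Ico_consecutive f (Nat.zero_le m) (by omega : m ≤ 2*m+1), hIco,
      ← Finset.range_eq_Ico]
  rw [hsplit]
  have h2 : ∑ i ∈ Finset.range (m+1), f (m+i) = f m + ∑ k ∈ Finset.Icc 1 m, f (m+k) := by
    rw [Finset.sum_range_succ']
    have hh : ∑ k ∈ Finset.Icc 1 m, f (m+k) = ∑ i ∈ Finset.range m, f (m+(i+1)) := by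
      rw [hIcc, Finset.sum_Ico_eq_sum_range]
      apply Finset.sum_congr
      · congr 1
      · intro i _
        congr 1
        omega
    rw [hh, add_zero]
    ring
  have h3 : ∑ i ∈ Finset.range m, f i = ∑ k ∈ Finset.Icc 1 m, f (m-k) := by
    rw [← Finset.sum_range_reflect]
    have hh : ∑ k ∈ Finset.Icc 1 m, f (m-k) = ∑ i ∈ Finset.range m, f (m-(1+i)) := by
      rw [hIcc, Finset.sum_Ico_eq_sum_range]
      apply Finset.sum_congr
      · congr 1
      · intros
        rfl
    rw [hh]
    apply Finset.sum_congr rfl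
    intro i hi
    rw [Finset.mem_range] at hi
    congr 1
    omega
  rw [h2, h3, Finset.sum_add_distrib]
  ring

lemma negpow_eq {a b : ℕ} (h : a % 2 = b % 2) : (-1:ℝ)^a = (-1:ℝ)^b := by
  rcases Nat.even_or_odd a with ha | ha
  · have ha' := Nat.even_iff.mp ha
    have hb : Even b := Nat.even_iff.mpr (by omega)
    rw [ha.neg_one_pow, hb.neg_one_pow]
  · have ha' := Nat.odd_iff.mp ha
    have hb : Odd b := Nat.odd_iff.mpr (by omega)
    rw [ha.neg_one_pow, hb.neg_one_pow]

theorem stmt_12 (m q : ℕ) (hq : 2 ≤ q) (hqm : q ≤ m) :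
    Tendsto (fun X : ℝ => ∫ t in (0:ℝ)..X, (Real.sin t) ^ (2 * m) / t ^ (2 * q - 1)) atTop
      (nhds (1 / 2 ^ (2 * m - 1) *
        ∑ k ∈ Finset.Icc 1 m,
          (-1 : ℝ) ^ (k + q) * (Nat.choose (2 * m) (m - k) : ℝ) *
            ((2 * k : ℝ) ^ (2 * q - 2) / (Nat.factorial (2 * q - 2))) * Real.log k)) := by
  set p := q - 1 with hpdef
  have hp1 : 1 ≤ p := by omega
  have h2q1 : 2*q-1 = 2*p+1 := by omega
  have h2q2 : 2*q-2 = 2*p := by omega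
  set γm : ℕ → ℝ := fun i => (-1:ℝ)^(i+m) * (((2*m).choose i : ℕ) : ℝ) / 4^m with hγ
  set βm : ℕ → ℝ := fun i => 2*(i:ℝ) - 2*(m:ℝ) with hβ
  have hmom : ∀ r ≤ p, ∑ i ∈ Finset.range (2*m+1), γm i * βm i ^ (2*r) = 0 := by
    intro r hr
    simp only [hγ, hβ]
    exact moments m r (by omega)
  have hcore := core (Finset.range (2*m+1)) γm βm p hp1 hmom
  have hfun : (fun X : ℝ => ∫ t in (0:ℝ)..X, (Real.sin t) ^ (2 * m) / t ^ (2 * q - 1))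
      = fun X : ℝ => ∫ t in (0:ℝ)..X, gr (Finset.range (2*m+1)) γm βm 0 t / t ^ (2*p+1) := by
    funext X
    rw [h2q1]
    apply intervalIntegral.integral_congr
    intro x _
    show Real.sin x ^ (2*m) / x ^ (2*p+1) = gr (Finset.range (2*m+1)) γm βm 0 x / x ^ (2*p+1)
    congr 1
    rw [gr_zero_formula]
    simp only [hγ, hβ]
    exact sinFourier m x
  have hβm0 : βm m ^ (2*p) = 0 := by
    simp only [hβ]
    rw [sub_self, zero_pow (by omega : 2*p ≠ 0)]
  have hN : ((2*p).factorial : ℝ) ≠ 0 := by exact_mod_cast Nat.factorial_ne_zero _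
  have h4 : (4:ℝ)^m = 2 * 2^(2*m-1) := by
    obtain ⟨n, hn⟩ : ∃ n, 2*m = n+1 := ⟨2*m-1, by omega⟩
    rw [show (4:ℝ) = 2^2 by norm_num, ← pow_mul, hn, Nat.add_sub_cancel, pow_succ]
    ring
  have h2m1 : (2:ℝ)^(2*m-1) ≠ 0 := by positivity
  have hstep1 : ∑ i ∈ Finset.range (2*m+1), -((-1:ℝ)^p * γm i * βm i ^ (2*p) * Real.log |βm i|)
      = ∑ i ∈ Finset.range (2*m+1),
          (-((-1:ℝ)^p * γm i * βm i ^ (2*p) * Real.log |(i:ℝ) - (m:ℝ)|)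
            + -((-1:ℝ)^p * γm i * βm i ^ (2*p)) * Real.log 2) := by
    apply Finset.sum_congr rfl
    intro i _
    rcases eq_or_ne i m with rfl | him
    · rw [hβm0]
      ring
    · have habs : |βm i| = 2 * |(i:ℝ) - (m:ℝ)| := by
        simp only [hβ]
        rw [show 2*(i:ℝ) - 2*(m:ℝ) = 2*((i:ℝ) - m) by ring, abs_mul]
        norm_num
      have hne : |(i:ℝ) - (m:ℝ)| ≠ 0 := by
        rw [abs_ne_zero, sub_ne_zero]
        exact_mod_cast him
      rw [habs, Real.log_mul two_ne_zero hne]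
      ring
  have hzero2 : ∑ i ∈ Finset.range (2*m+1), -((-1:ℝ)^p * γm i * βm i ^ (2*p)) * Real.log 2
      = 0 := by
    rw [← Finset.sum_mul]
    have h0 : ∑ i ∈ Finset.range (2*m+1), -((-1:ℝ)^p * γm i * βm i ^ (2*p))
        = -((-1:ℝ)^p) * ∑ i ∈ Finset.range (2*m+1), γm i * βm i ^ (2*p) := by
      rw [Finset.mul_sum]
      apply Finset.sum_congr rfl
      intro i _
      ring
    rw [h0, hmom p le_rfl, mul_zero, zero_mul]
  have hfold := sum_fold m (fun i => -((-1:ℝ)^p * γm i * βm i ^ (2*p) * Real.log |(i:ℝ) - (m:ℝ)|))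
  have hfm : -((-1:ℝ)^p * γm m * βm m ^ (2*p) * Real.log |(m:ℝ) - (m:ℝ)|) = 0 := by
    rw [hβm0]
    ring
  have hper : ∀ k ∈ Finset.Icc 1 m,
      (-((-1:ℝ)^p * γm (m-k) * βm (m-k) ^ (2*p) * Real.log |((m-k:ℕ):ℝ) - (m:ℝ)|)
        + -((-1:ℝ)^p * γm (m+k) * βm (m+k) ^ (2*p) * Real.log |((m+k:ℕ):ℝ) - (m:ℝ)|))
      = ((2*p).factorial : ℝ) * (1 / 2 ^ (2 * m - 1)) *
          ((-1 : ℝ) ^ (k + q) * (((2*m).choose (m - k) : ℕ) : ℝ)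
            * ((2 * (k:ℝ)) ^ (2 * q - 2) / (((2*q-2).factorial : ℕ) : ℝ)) * Real.log (k:ℝ)) := by
    intro k hk
    rw [Finset.mem_Icc] at hk
    have hg1 : γm (m-k) = (-1:ℝ)^k * (((2*m).choose (m-k) : ℕ) : ℝ) / 4^m := by
      simp only [hγ]
      rw [negpow_eq (show ((m-k)+m) % 2 = k % 2 by omega)]
    have hg2 : γm (m+k) = (-1:ℝ)^k * (((2*m).choose (m-k) : ℕ) : ℝ) / 4^m := by
      simp only [hγ]
      have hch : ((2*m).choose (m+k)) = ((2*m).choose (m-k)) := by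
        have h := Nat.choose_symm (show m+k ≤ 2*m by omega)
        rw [show 2*m-(m+k) = m-k by omega] at h
        exact h.symm
      rw [hch, negpow_eq (show ((m+k)+m) % 2 = k % 2 by omega)]
    have hb1 : βm (m-k) ^ (2*p) = (2*(k:ℝ))^(2*p) := by
      simp only [hβ]
      rw [show 2*(((m-k:ℕ)):ℝ) - 2*(m:ℝ) = -(2*(k:ℝ)) by
        push_cast [Nat.cast_sub hk.2]; ring]
      exact (even_two_mul p).neg_pow _
    have hb2 : βm (m+k) ^ (2*p) = (2*(k:ℝ))^(2*p) := by
      simp only [hβ]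
      rw [show 2*(((m+k:ℕ)):ℝ) - 2*(m:ℝ) = 2*(k:ℝ) by push_cast; ring]
    have hl1 : |((m-k:ℕ):ℝ) - (m:ℝ)| = (k:ℝ) := by
      rw [show ((m-k:ℕ):ℝ) - (m:ℝ) = -(k:ℝ) by push_cast [Nat.cast_sub hk.2]; ring, abs_neg,
        abs_of_nonneg (Nat.cast_nonneg k)]
    have hl2 : |((m+k:ℕ):ℝ) - (m:ℝ)| = (k:ℝ) := by
      rw [show ((m+k:ℕ):ℝ) - (m:ℝ) = (k:ℝ) by push_cast; ring,
        abs_of_nonneg (Nat.cast_nonneg k)]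
    have hs : (-1:ℝ)^(k+q) = -((-1:ℝ)^k * (-1:ℝ)^p) := by
      rw [pow_add, show q = p+1 by omega, pow_succ]
      ring
    rw [hg1, hg2, hb1, hb2, hl1, hl2, hs, h2q2, h4]
    field_simp
    ring
  have hval : (1/((2*p).factorial : ℝ)) * ∑ i ∈ Finset.range (2*m+1),
        -((-1:ℝ)^p * γm i * βm i ^ (2*p) * Real.log |βm i|)
      = 1 / 2 ^ (2 * m - 1) *
          ∑ k ∈ Finset.Icc 1 m,
            (-1 : ℝ) ^ (k + q) * (((2*m).choose (m - k) : ℕ) : ℝ) *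
              ((2 * (k:ℝ)) ^ (2 * q - 2) / (((2*q-2).factorial : ℕ) : ℝ)) * Real.log (k:ℝ) := by
    rw [hstep1, Finset.sum_add_distrib, hzero2, add_zero, hfold, hfm, zero_add,
      Finset.sum_congr rfl hper, ← Finset.mul_sum]
    rw [← mul_assoc, ← mul_assoc, one_div, inv_mul_cancel₀ hN, one_mul]
  rw [hfun, ← hval]
  exact hcore
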